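/- Let A be a real symmetric m × m matrix and B a real symmetric n × n matrix (with m, n finite and nonempty). Then the spectrum of the Kronecker product A ⊗ₖ B equals the set of products { a * b | a ∈ spectrum ℝ A, b ∈ spectrum ℝ B }. -/

import Mathlib

open Matrix Kronecker

theorem spectrum_kronecker_symmetric
    (m n : Type*) [Fintype m] [DecidableEq m] [Nonempty m]
    [Fintype n] [DecidableEq n] [Nonempty n]
    (A : Matrix m m ℝ) (B : Matrix n n ℝ)
    (hA : Aᵀ = A) (hB : Bᵀ = B) :
    spectrum ℝ (A ⊗ₖ B) =
      {μ : ℝ | ∃ a ∈ spectrum ℝ A, ∃ b ∈ spectrum ℝ B, a * b = μ} := by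
  have hA' : A.IsHermitian := by
    unfold Matrix.IsHermitian; rw [Matrix.conjTranspose_eq_transpose_of_trivial]; exact hA
  have hB' : B.IsHermitian := by
    unfold Matrix.IsHermitian; rw [Matrix.conjTranspose_eq_transpose_of_trivial]; exact hB
  set U : Matrix m m ℝ := (hA'.eigenvectorUnitary : Matrix m m ℝ) with hU
  set V : Matrix n n ℝ := (hB'.eigenvectorUnitary : Matrix n n ℝ) with hV
  have hUu : star U * U = 1 ∧ U * star U = 1 :=
    ⟨hA'.eigenvectorUnitary.2.1, hA'.eigenvectorUnitary.2.2⟩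
  have hVu : star V * V = 1 ∧ V * star V = 1 :=
    ⟨hB'.eigenvectorUnitary.2.1, hB'.eigenvectorUnitary.2.2⟩
  have hstar : star (U ⊗ₖ V) = star U ⊗ₖ star V := by
    ext ⟨i, j⟩ ⟨k, l⟩
    simp [Matrix.star_apply, Matrix.kroneckerMap_apply]
  have hW : (U ⊗ₖ V) ∈ unitary (Matrix (m × n) (m × n) ℝ) := by
    constructor
    · rw [hstar, ← Matrix.mul_kronecker_mul, hUu.1, hVu.1, Matrix.one_kronecker_one]
    · rw [hstar, ← Matrix.mul_kronecker_mul, hUu.2, hVu.2, Matrix.one_kronecker_one]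
  have hdecomp : A ⊗ₖ B =
      (U ⊗ₖ V) * Matrix.diagonal (fun p : m × n => hA'.eigenvalues p.1 * hB'.eigenvalues p.2)
        * star (U ⊗ₖ V) := by
    conv_lhs => rw [hA'.spectral_theorem, hB'.spectral_theorem]
    simp only [Unitary.conjStarAlgAut_apply]
    rw [Matrix.mul_kronecker_mul, Matrix.mul_kronecker_mul, hstar,
      Matrix.diagonal_kronecker_diagonal]
    norm_num
    rfl
  have key : spectrum ℝ (A ⊗ₖ B) =
      spectrum ℝ (Matrix.diagonal (fun p : m × n => hA'.eigenvalues p.1 * hB'.eigenvalues p.2)) := by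
    rw [hdecomp]
    exact Unitary.spectrum_star_right_conjugate (U := ⟨U ⊗ₖ V, hW⟩)
  rw [key, spectrum_diagonal, hA'.spectrum_real_eq_range_eigenvalues,
    hB'.spectrum_real_eq_range_eigenvalues]
  ext μ
  constructor
  · rintro ⟨⟨i, j⟩, rfl⟩
    exact ⟨_, ⟨i, rfl⟩, _, ⟨j, rfl⟩, rfl⟩
  · rintro ⟨a, ⟨i, rfl⟩, b, ⟨j, rfl⟩, rfl⟩
    exact ⟨(i, j), rfl⟩
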